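/- arXiv:1810.03176 — 5 statements merged into one kernel-verified Lean document; each statement's English description precedes it below -/
import Mathlib

section
/- Let X = !![0, 1; 1, 0] and Z = !![1, 0; 0, -1] be 2×2 complex matrices, and let n be a positive natural number. For y : Fin n → {0,1} × {0,1}, define the n-qubit Pauli string P_y ∈ Matrix (Fin n → Fin 2) (Fin n → Fin 2) ℂ entrywise by P_y(i, j) = Π_{k} (X^{(y k).2} Z^{(y k).1})(i k, j k). Then for every ρ ∈ Matrix (Fin n → Fin 2) (Fin n → Fin 2) ℂ, the n-qubit Pauli twirl satisfies 4^{-n} · Σ_{y} P_y ρ P_yᴴ = (trace(ρ)/2^n) · I, where the sum runs over all y : Fin n → {0,1} × {0,1}, ᴴ denotes the conjugate transpose, and I is the identity matrix of size 2^n. -/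
open Matrix

/-- The Pauli `X` matrix. -/
noncomputable def pauliX : Matrix (Fin 2) (Fin 2) ℂ := !![0, 1; 1, 0]

/-- The Pauli `Z` matrix. -/
noncomputable def pauliZ : Matrix (Fin 2) (Fin 2) ℂ := !![1, 0; 0, -1]

/-- The `n`-qubit Pauli string `P_y`, the entrywise (Kronecker) tensor product of the
single-qubit matrices `X^{(y k).2} Z^{(y k).1}`. -/
noncomputable def pauliString {n : ℕ} (y : Fin n → Fin 2 × Fin 2) :
    Matrix (Fin n → Fin 2) (Fin n → Fin 2) ℂ :=
  fun i j => ∏ k : Fin n,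
    (pauliX ^ (((y k).2 : ℕ)) * pauliZ ^ (((y k).1 : ℕ))) (i k) (j k)

lemma key (i k j l : Fin 2) :
    ∑ a : Fin 2 × Fin 2,
      (pauliX ^ ((a.2 : ℕ)) * pauliZ ^ ((a.1 : ℕ))) i k *
        (starRingEnd ℂ) ((pauliX ^ ((a.2 : ℕ)) * pauliZ ^ ((a.1 : ℕ))) j l)
      = if i = j ∧ k = l then 2 else 0 := by
  fin_cases i <;> fin_cases k <;> fin_cases j <;> fin_cases l <;>
    simp [Fintype.sum_prod_type, Fin.sum_univ_two, pauliX, pauliZ, pow_succ, Matrix.mul_apply] <;>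
    norm_num

lemma sum_pauli {n : ℕ} (i k j l : Fin n → Fin 2) :
    ∑ y : Fin n → Fin 2 × Fin 2, pauliString y i k * (starRingEnd ℂ) (pauliString y j l)
      = if i = j ∧ k = l then (2 : ℂ) ^ n else 0 := by
  have h : ∀ y : Fin n → Fin 2 × Fin 2,
      pauliString y i k * (starRingEnd ℂ) (pauliString y j l)
        = ∏ m : Fin n,
          ((pauliX ^ (((y m).2 : ℕ)) * pauliZ ^ (((y m).1 : ℕ))) (i m) (k m) *
            (starRingEnd ℂ) ((pauliX ^ (((y m).2 : ℕ)) * pauliZ ^ (((y m).1 : ℕ))) (j m) (l m))) := by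
    intro y
    rw [pauliString, pauliString, map_prod, Finset.prod_mul_distrib]
  simp_rw [h]
  rw [← Fintype.piFinset_univ,
    ← Finset.prod_univ_sum (fun _ => (Finset.univ : Finset (Fin 2 × Fin 2)))
      (fun m a => (pauliX ^ ((a.2 : ℕ)) * pauliZ ^ ((a.1 : ℕ))) (i m) (k m) *
        (starRingEnd ℂ) ((pauliX ^ ((a.2 : ℕ)) * pauliZ ^ ((a.1 : ℕ))) (j m) (l m)))]
  simp_rw [key]
  by_cases hc : i = j ∧ k = l
  · rw [if_pos hc]
    obtain ⟨h1, h2⟩ := hc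
    subst h1; subst h2
    simp
  · rw [if_neg hc]
    have : ∃ m : Fin n, ¬(i m = j m ∧ k m = l m) := by
      by_contra hcc
      push_neg at hcc
      exact hc ⟨funext fun m => (hcc m).1, funext fun m => (hcc m).2⟩
    obtain ⟨m, hm⟩ := this
    exact Finset.prod_eq_zero (Finset.mem_univ m) (if_neg hm)


/-- `n`-qubit Pauli twirl: `4^{-n} Σ_y P_y ρ P_yᴴ = (tr ρ / 2^n) • I`. -/
theorem pauli_twirl_n (n : ℕ) (hn : 0 < n)
    (ρ : Matrix (Fin n → Fin 2) (Fin n → Fin 2) ℂ) :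
    ((4 : ℂ) ^ n)⁻¹ • ∑ y : Fin n → Fin 2 × Fin 2,
        pauliString y * ρ * (pauliString y)ᴴ
      = (Matrix.trace ρ / 2 ^ n) • (1 : Matrix (Fin n → Fin 2) (Fin n → Fin 2) ℂ) := by
  ext i j
  have step : ∑ y : Fin n → Fin 2 × Fin 2, (pauliString y * ρ * (pauliString y)ᴴ) i j
      = if i = j then (2 : ℂ) ^ n * Matrix.trace ρ else 0 := by
    calc ∑ y : Fin n → Fin 2 × Fin 2, (pauliString y * ρ * (pauliString y)ᴴ) i j
        = ∑ y : Fin n → Fin 2 × Fin 2, ∑ l, ∑ k,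
            ρ k l * (pauliString y i k * (starRingEnd ℂ) (pauliString y j l)) := by
          refine Finset.sum_congr rfl fun y _ => ?_
          simp only [Matrix.mul_apply, conjTranspose_apply, Finset.sum_mul, starRingEnd_apply]
          exact Finset.sum_congr rfl fun l _ => Finset.sum_congr rfl fun k _ => by ring
      _ = ∑ l, ∑ k, ρ k l *
            ∑ y : Fin n → Fin 2 × Fin 2, pauliString y i k * (starRingEnd ℂ) (pauliString y j l) := by
          rw [Finset.sum_comm]
          refine Finset.sum_congr rfl fun l _ => ?_
          rw [Finset.sum_comm]
          refine Finset.sum_congr rfl fun k _ => ?_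
          rw [Finset.mul_sum]
      _ = ∑ l, ∑ k, ρ k l * (if i = j ∧ k = l then (2 : ℂ) ^ n else 0) := by
          simp_rw [sum_pauli]
      _ = if i = j then (2 : ℂ) ^ n * Matrix.trace ρ else 0 := by
          by_cases hij : i = j
          · simp [hij, Matrix.trace, Matrix.diag, Finset.mul_sum, mul_comm]
          · simp [hij]
  simp only [Matrix.smul_apply, Matrix.sum_apply] at *
  rw [step, Matrix.one_apply]
  split_ifs with hij
  · rw [show (4 : ℂ) ^ n = 2 ^ n * 2 ^ n by rw [← mul_pow]; norm_num]
    have h2 : (2 : ℂ) ^ n ≠ 0 := pow_ne_zero _ two_ne_zero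
    field_simp
    simp only [smul_eq_mul]
    field_simp
  · simp
end

section
/- Let r, M be positive natural numbers, let l ≥ 0, let ε ∈ ℝ with 0 ≤ ε ≤ 1/2, and let q : ({0,1}^r) × ({0,1}^M) → ℝ be any function. Define the binary Fourier transform in the second argument, q̂(x, s) = 2^{-M} · Σ_{y ∈ {0,1}^M} (-1)^{s·y} q(x, y). Define the noisy function q'(x, y) = Σ_{s ∈ {0,1}^M} (1-2ε)^{wt(s)} (-1)^{s·y} q̂(x, s) and the truncated pseudo-function p'(x, y) = Σ_{s ∈ {0,1}^M, wt(s) < l} (1-2ε)^{wt(s)} (-1)^{s·y} q̂(x, s). Then the variance-type bound holds: 2^{-M} · Σ_{y ∈ {0,1}^M} ( Σ_{x ∈ {0,1}^r} |p'(x, y) - q'(x, y)| )² ≤ 2^r · (1-2ε)^{2l} · ( 2^{-M} · Σ_{x ∈ {0,1}^r} Σ_{y ∈ {0,1}^M} q(x, y)² ). -/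
/-- The Hamming weight of `s ∈ {0,1}^M`: the number of coordinates equal to `1`. -/
def hammingWt {M : ℕ} (s : Fin M → Fin 2) : ℕ :=
  (Finset.univ.filter fun i => s i = 1).card

/-- Binary Fourier transform in the second argument:
`q̂(x,s) = 2^{-M} Σ_y (-1)^{s·y} q(x,y)`. -/
noncomputable def fourier2 {r M : ℕ} (q : (Fin r → Fin 2) → (Fin M → Fin 2) → ℝ)
    (x : Fin r → Fin 2) (s : Fin M → Fin 2) : ℝ :=
  ((2 : ℝ) ^ M)⁻¹ * ∑ y : Fin M → Fin 2,
    (-1 : ℝ) ^ (∑ i, (s i).val * (y i).val) * q x y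

/-- The noisy function: `q'(x,y) = Σ_s (1-2ε)^{wt s} (-1)^{s·y} q̂(x,s)`. -/
noncomputable def noisyFn {r M : ℕ} (ε : ℝ) (q : (Fin r → Fin 2) → (Fin M → Fin 2) → ℝ)
    (x : Fin r → Fin 2) (y : Fin M → Fin 2) : ℝ :=
  ∑ s : Fin M → Fin 2,
    (1 - 2 * ε) ^ hammingWt s * (-1 : ℝ) ^ (∑ i, (s i).val * (y i).val) * fourier2 q x s

/-- The truncated pseudo-function:
`p'(x,y) = Σ_{wt s < l} (1-2ε)^{wt s} (-1)^{s·y} q̂(x,s)`. -/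
noncomputable def truncFn {r M : ℕ} (ε : ℝ) (l : ℕ)
    (q : (Fin r → Fin 2) → (Fin M → Fin 2) → ℝ)
    (x : Fin r → Fin 2) (y : Fin M → Fin 2) : ℝ :=
  ∑ s ∈ Finset.univ.filter fun s : Fin M → Fin 2 => hammingWt s < l,
    (1 - 2 * ε) ^ hammingWt s * (-1 : ℝ) ^ (∑ i, (s i).val * (y i).val) * fourier2 q x s


/-- character -/
noncomputable def chi {M : ℕ} (s y : Fin M → Fin 2) : ℝ :=
  (-1 : ℝ) ^ (∑ i, (s i).val * (y i).val)

lemma chi_symm {M : ℕ} (s y : Fin M → Fin 2) : chi s y = chi y s := by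
  unfold chi; congr 1; exact Finset.sum_congr rfl fun i _ => Nat.mul_comm _ _

lemma chi_orth {M : ℕ} (s t : Fin M → Fin 2) :
    ∑ y : Fin M → Fin 2, chi s y * chi t y = if s = t then (2:ℝ)^M else 0 := by
  have h1 : ∀ y : Fin M → Fin 2, chi s y * chi t y
      = ∏ i, (-1:ℝ) ^ ((s i).val * (y i).val + (t i).val * (y i).val) := by
    intro y
    unfold chi
    rw [← pow_add, ← Finset.sum_add_distrib, Finset.prod_pow_eq_pow_sum]
  rw [Finset.sum_congr rfl fun y _ => h1 y]
  rw [← Fintype.piFinset_univ,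
    Finset.sum_prod_piFinset Finset.univ
      (fun i (a : Fin 2) => (-1:ℝ) ^ ((s i).val * a.val + (t i).val * a.val))]
  have h2 : ∀ i : Fin M, ∑ a : Fin 2, (-1:ℝ) ^ ((s i).val * a.val + (t i).val * a.val)
      = 1 + (-1:ℝ) ^ ((s i).val + (t i).val) := by
    intro i
    rw [Fin.sum_univ_two]
    simp
  rw [Finset.prod_congr rfl fun i _ => h2 i]
  by_cases h : s = t
  · subst h
    have h3 : ∀ i ∈ Finset.univ (α := Fin M),
        (1 + (-1:ℝ) ^ ((s i).val + (s i).val)) = 2 := by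
      intro i _
      rw [← two_mul, pow_mul]
      norm_num
    rw [if_pos rfl, Finset.prod_congr rfl h3, Finset.prod_const, Finset.card_univ,
      Fintype.card_fin]
  · rw [if_neg h]
    obtain ⟨i, hi⟩ : ∃ i, s i ≠ t i := by
      by_contra hc; push_neg at hc; exact h (funext hc)
    apply Finset.prod_eq_zero (Finset.mem_univ i)
    have : (s i).val + (t i).val = 1 := by
      have hv : (s i).val ≠ (t i).val := fun hh => hi (Fin.ext hh)
      omega
    rw [this]; norm_num

lemma parseval_subset {M : ℕ} (T : Finset (Fin M → Fin 2)) (a : (Fin M → Fin 2) → ℝ) :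
    ∑ y : Fin M → Fin 2, (∑ s ∈ T, a s * chi s y) ^ 2 = 2 ^ M * ∑ s ∈ T, (a s) ^ 2 := by
  have expand : ∀ y : Fin M → Fin 2, (∑ s ∈ T, a s * chi s y) ^ 2
      = ∑ s ∈ T, ∑ t ∈ T, (a s * a t) * (chi s y * chi t y) := by
    intro y
    rw [sq, Finset.sum_mul_sum]
    exact Finset.sum_congr rfl fun s _ => Finset.sum_congr rfl fun t _ => by ring
  rw [Finset.sum_congr rfl fun y _ => expand y, Finset.sum_comm]
  have step : ∀ s ∈ T, ∑ y : Fin M → Fin 2, ∑ t ∈ T, (a s * a t) * (chi s y * chi t y)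
      = (a s) ^ 2 * 2 ^ M := by
    intro s hs
    rw [Finset.sum_comm]
    have h1 : ∀ t ∈ T, ∑ y : Fin M → Fin 2, (a s * a t) * (chi s y * chi t y)
        = (a s * a t) * (if s = t then (2:ℝ)^M else 0) := by
      intro t _
      rw [← Finset.mul_sum, chi_orth]
    rw [Finset.sum_congr rfl h1]
    have h2 : ∀ t ∈ T, (a s * a t) * (if s = t then (2:ℝ)^M else 0)
        = if s = t then (a s * a t) * (2:ℝ)^M else 0 := by
      intro t _
      split <;> simp
    rw [Finset.sum_congr rfl h2, Finset.sum_ite_eq T s fun t => (a s * a t) * (2:ℝ)^M,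
      if_pos hs]
    ring
  rw [Finset.sum_congr rfl step, ← Finset.sum_mul]
  ring

lemma inv_formula {M : ℕ} (f : (Fin M → Fin 2) → ℝ) (y : Fin M → Fin 2) :
    ∑ s : Fin M → Fin 2, (((2:ℝ) ^ M)⁻¹ * ∑ y' : Fin M → Fin 2, chi s y' * f y') * chi s y
      = f y := by
  have key : ∀ y' : Fin M → Fin 2,
      ∑ s : Fin M → Fin 2, chi s y' * chi s y = if y' = y then (2:ℝ)^M else 0 := by
    intro y'
    calc ∑ s : Fin M → Fin 2, chi s y' * chi s y
        = ∑ s : Fin M → Fin 2, chi y' s * chi y s :=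
          Finset.sum_congr rfl fun s _ => by rw [chi_symm s y', chi_symm s y]
      _ = _ := chi_orth y' y
  have h1 : ∀ s : Fin M → Fin 2,
      (((2:ℝ) ^ M)⁻¹ * ∑ y' : Fin M → Fin 2, chi s y' * f y') * chi s y
      = ∑ y' : Fin M → Fin 2, ((2:ℝ)^M)⁻¹ * ((chi s y' * chi s y) * f y') := by
    intro s
    rw [Finset.mul_sum, Finset.sum_mul]
    exact Finset.sum_congr rfl fun y' _ => by ring
  rw [Finset.sum_congr rfl fun s _ => h1 s, Finset.sum_comm]
  have h2 : ∀ y' : Fin M → Fin 2,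
      ∑ s : Fin M → Fin 2, ((2:ℝ)^M)⁻¹ * ((chi s y' * chi s y) * f y')
      = ((2:ℝ)^M)⁻¹ * ((if y' = y then (2:ℝ)^M else 0) * f y') := by
    intro y'
    rw [← Finset.mul_sum, ← Finset.sum_mul, key y']
  rw [Finset.sum_congr rfl fun y' _ => h2 y']
  have h3 : ∀ y' : Fin M → Fin 2,
      ((2:ℝ)^M)⁻¹ * ((if y' = y then (2:ℝ)^M else 0) * f y')
      = if y' = y then ((2:ℝ)^M)⁻¹ * ((2:ℝ)^M * f y') else 0 := by
    intro y'; split <;> simp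
  rw [Finset.sum_congr rfl fun y' _ => h3 y',
    Finset.sum_ite_eq' Finset.univ y fun y' => ((2:ℝ)^M)⁻¹ * ((2:ℝ)^M * f y'),
    if_pos (Finset.mem_univ y), ← mul_assoc, inv_mul_cancel₀ (by positivity), one_mul]

lemma parseval {M : ℕ} (f : (Fin M → Fin 2) → ℝ) :
    ∑ s : Fin M → Fin 2, (((2:ℝ) ^ M)⁻¹ * ∑ y : Fin M → Fin 2, chi s y * f y) ^ 2
      = ((2:ℝ) ^ M)⁻¹ * ∑ y : Fin M → Fin 2, (f y) ^ 2 := by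
  have h := parseval_subset Finset.univ
    (fun s => ((2:ℝ) ^ M)⁻¹ * ∑ y : Fin M → Fin 2, chi s y * f y)
  simp only [Finset.sum_congr rfl fun y (_ : y ∈ Finset.univ) =>
    congrArg (· ^ 2) (inv_formula f y)] at h
  have h2 : ∑ y : Fin M → Fin 2, (f y) ^ 2
      = 2 ^ M * ∑ s : Fin M → Fin 2,
        (((2:ℝ) ^ M)⁻¹ * ∑ y : Fin M → Fin 2, chi s y * f y) ^ 2 := h
  rw [h2, ← mul_assoc, inv_mul_cancel₀ (by positivity : ((2:ℝ)^M) ≠ 0), one_mul]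

/-- Variance-type bound for truncating the Fourier series of a noisy function. -/
theorem truncation_variance_bound (r M : ℕ) (hr : 0 < r) (hM : 0 < M) (l : ℕ)
    (ε : ℝ) (hε0 : 0 ≤ ε) (hε : ε ≤ 1 / 2)
    (q : (Fin r → Fin 2) → (Fin M → Fin 2) → ℝ) :
    ((2 : ℝ) ^ M)⁻¹ * ∑ y : Fin M → Fin 2,
        (∑ x : Fin r → Fin 2, |truncFn ε l q x y - noisyFn ε q x y|) ^ 2
      ≤ 2 ^ r * (1 - 2 * ε) ^ (2 * l) *
          (((2 : ℝ) ^ M)⁻¹ * ∑ x : Fin r → Fin 2, ∑ y : Fin M → Fin 2, (q x y) ^ 2) := by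
  have hc0 : (0:ℝ) ≤ 1 - 2 * ε := by linarith
  have hc1 : (1:ℝ) - 2 * ε ≤ 1 := by linarith
  have hpow : ((2:ℝ) ^ M) ≠ 0 := by positivity
  set Tc := Finset.univ.filter (fun s : Fin M → Fin 2 => ¬ hammingWt s < l) with hTc
  -- express the difference as a sum over high-weight characters
  have hD : ∀ x y, truncFn ε l q x y - noisyFn ε q x y
      = -∑ s ∈ Tc, ((1 - 2 * ε) ^ hammingWt s * fourier2 q x s) * chi s y := by
    intro x y
    unfold truncFn noisyFn
    rw [← Finset.sum_filter_add_sum_filter_not Finset.univ (fun s => hammingWt s < l)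
      (fun s => (1 - 2 * ε) ^ hammingWt s * (-1:ℝ) ^ (∑ i, (s i).val * (y i).val)
        * fourier2 q x s)]
    have hterm : ∀ (S : Finset (Fin M → Fin 2)),
        ∑ s ∈ S, (1 - 2 * ε) ^ hammingWt s * (-1:ℝ) ^ (∑ i, (s i).val * (y i).val)
          * fourier2 q x s
        = ∑ s ∈ S, ((1 - 2 * ε) ^ hammingWt s * fourier2 q x s) * chi s y := fun S =>
      Finset.sum_congr rfl fun s _ => by unfold chi; ring
    rw [hterm, hterm, hTc]
    ring
  -- per-x variance bound
  have key : ∀ x, ((2:ℝ) ^ M)⁻¹ * ∑ y : Fin M → Fin 2,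
      (truncFn ε l q x y - noisyFn ε q x y) ^ 2
      ≤ (1 - 2 * ε) ^ (2 * l) *
        (((2:ℝ) ^ M)⁻¹ * ∑ y : Fin M → Fin 2, (q x y) ^ 2) := by
    intro x
    have e1 : ∑ y : Fin M → Fin 2, (truncFn ε l q x y - noisyFn ε q x y) ^ 2
        = 2 ^ M * ∑ s ∈ Tc, ((1 - 2 * ε) ^ hammingWt s * fourier2 q x s) ^ 2 := by
      calc ∑ y : Fin M → Fin 2, (truncFn ε l q x y - noisyFn ε q x y) ^ 2
          = ∑ y : Fin M → Fin 2,
            (∑ s ∈ Tc, ((1 - 2 * ε) ^ hammingWt s * fourier2 q x s) * chi s y) ^ 2 :=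
            Finset.sum_congr rfl fun y _ => by rw [hD x y, neg_sq]
        _ = _ := parseval_subset Tc _
    rw [e1, ← mul_assoc, inv_mul_cancel₀ hpow, one_mul]
    have e2 : ((2:ℝ) ^ M)⁻¹ * ∑ y : Fin M → Fin 2, (q x y) ^ 2
        = ∑ s : Fin M → Fin 2, (fourier2 q x s) ^ 2 := by
      rw [← parseval (q x)]
      rfl
    rw [e2]
    calc ∑ s ∈ Tc, ((1 - 2 * ε) ^ hammingWt s * fourier2 q x s) ^ 2
        ≤ ∑ s ∈ Tc, (1 - 2 * ε) ^ (2 * l) * (fourier2 q x s) ^ 2 := by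
          apply Finset.sum_le_sum
          intro s hs
          rw [mul_pow, ← pow_mul]
          apply mul_le_mul_of_nonneg_right _ (sq_nonneg _)
          apply pow_le_pow_of_le_one hc0 hc1
          have hw : l ≤ hammingWt s := by
            have := (Finset.mem_filter.mp hs).2
            omega
          omega
      _ = (1 - 2 * ε) ^ (2 * l) * ∑ s ∈ Tc, (fourier2 q x s) ^ 2 :=
          (Finset.mul_sum _ _ _).symm
      _ ≤ (1 - 2 * ε) ^ (2 * l) * ∑ s : Fin M → Fin 2, (fourier2 q x s) ^ 2 := by
          apply mul_le_mul_of_nonneg_left _ (pow_nonneg hc0 _)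
          exact Finset.sum_le_sum_of_subset_of_nonneg (Finset.subset_univ _)
            (fun s _ _ => sq_nonneg _)
  -- Cauchy–Schwarz in x
  have hcard : (Fintype.card (Fin r → Fin 2) : ℝ) = 2 ^ r := by
    rw [Fintype.card_fun, Fintype.card_fin, Fintype.card_fin]
    push_cast
    ring
  have CS : ∀ y : Fin M → Fin 2,
      (∑ x : Fin r → Fin 2, |truncFn ε l q x y - noisyFn ε q x y|) ^ 2
      ≤ 2 ^ r * ∑ x : Fin r → Fin 2, (truncFn ε l q x y - noisyFn ε q x y) ^ 2 := by
    intro y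
    have h := sq_sum_le_card_mul_sum_sq (s := Finset.univ)
      (f := fun x : Fin r → Fin 2 => |truncFn ε l q x y - noisyFn ε q x y|)
    simp only [sq_abs, Finset.card_univ, hcard] at h
    exact h
  calc ((2:ℝ) ^ M)⁻¹ * ∑ y : Fin M → Fin 2,
        (∑ x : Fin r → Fin 2, |truncFn ε l q x y - noisyFn ε q x y|) ^ 2
      ≤ ((2:ℝ) ^ M)⁻¹ * ∑ y : Fin M → Fin 2,
        (2 ^ r * ∑ x : Fin r → Fin 2, (truncFn ε l q x y - noisyFn ε q x y) ^ 2) := by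
        apply mul_le_mul_of_nonneg_left _ (by positivity)
        exact Finset.sum_le_sum fun y _ => CS y
    _ = 2 ^ r * ∑ x : Fin r → Fin 2, (((2:ℝ) ^ M)⁻¹ *
        ∑ y : Fin M → Fin 2, (truncFn ε l q x y - noisyFn ε q x y) ^ 2) := by
        simp only [← Finset.mul_sum]
        rw [Finset.sum_comm]
        ring
    _ ≤ 2 ^ r * ∑ x : Fin r → Fin 2, ((1 - 2 * ε) ^ (2 * l) *
        (((2:ℝ) ^ M)⁻¹ * ∑ y : Fin M → Fin 2, (q x y) ^ 2)) := by
        apply mul_le_mul_of_nonneg_left _ (by positivity)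
        exact Finset.sum_le_sum fun x _ => key x
    _ = 2 ^ r * (1 - 2 * ε) ^ (2 * l) *
        (((2:ℝ) ^ M)⁻¹ * ∑ x : Fin r → Fin 2, ∑ y : Fin M → Fin 2, (q x y) ^ 2) := by
        simp only [Finset.mul_sum]
        exact Finset.sum_congr rfl fun x _ => Finset.sum_congr rfl fun y _ => by ring
end

section
/- Let r, M be positive natural numbers, let l ≥ 0, let ε ∈ ℝ with 0 ≤ ε ≤ 1/2, and let q : ({0,1}^r) × ({0,1}^M) → ℝ be any function. Define the binary Fourier transform in the second argument, q̂(x, s) = 2^{-M} · Σ_{y ∈ {0,1}^M} (-1)^{s·y} q(x, y). Define the noisy function q'(x, y) = Σ_{s ∈ {0,1}^M} (1-2ε)^{wt(s)} (-1)^{s·y} q̂(x, s) and the truncated pseudo-function p'(x, y) = Σ_{s ∈ {0,1}^M, wt(s) < l} (1-2ε)^{wt(s)} (-1)^{s·y} q̂(x, s). Then the mean-type bound holds: ( 2^{-M} · Σ_{y ∈ {0,1}^M} Σ_{x ∈ {0,1}^r} |p'(x, y) - q'(x, y)| )² ≤ 2^r · (1-2ε)^{2l} · ( 2^{-M} ·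 Σ_{x ∈ {0,1}^r} Σ_{y ∈ {0,1}^M} q(x, y)² ). -/
/-- Orthogonality of characters. -/
lemma chi_ortho {M : ℕ} (s t : Fin M → Fin 2) :
    ∑ y : Fin M → Fin 2, chi s y * chi t y = if s = t then (2 : ℝ) ^ M else 0 := by
  have h1 : ∀ y : Fin M → Fin 2,
      chi s y * chi t y = ∏ i, (-1 : ℝ) ^ ((s i).val * (y i).val + (t i).val * (y i).val) := by
    intro y
    unfold chi
    rw [← Finset.prod_pow_eq_pow_sum, ← Finset.prod_pow_eq_pow_sum, ← Finset.prod_mul_distrib]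
    exact Finset.prod_congr rfl fun i _ => (pow_add _ _ _).symm
  rw [Finset.sum_congr rfl fun y _ => h1 y]
  rw [← Fintype.prod_sum (fun i (b : Fin 2) => (-1 : ℝ) ^ ((s i).val * b.val + (t i).val * b.val))]
  by_cases hst : s = t
  · subst hst
    simp only [if_pos rfl]
    have : ∀ i, (∑ b : Fin 2, (-1 : ℝ) ^ ((s i).val * b.val + (s i).val * b.val)) = 2 := by
      intro i
      rw [Fin.sum_univ_two]
      have : (s i) = 0 ∨ (s i) = 1 := by omega
      rcases this with h | h <;> simp [h] <;> norm_num
    rw [Finset.prod_congr rfl fun i _ => this i]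
    simp
  · rw [if_neg hst]
    obtain ⟨i, hi⟩ : ∃ i, s i ≠ t i := by
      by_contra h
      push_neg at h
      exact hst (funext h)
    apply Finset.prod_eq_zero (Finset.mem_univ i)
    rw [Fin.sum_univ_two]
    have h0 : (s i).val + (t i).val = 1 := by omega
    simp only [Fin.val_zero, Fin.val_one, Nat.mul_zero, Nat.mul_one, pow_zero]
    rw [h0]
    norm_num

/-- Parseval for coefficient expansions. -/
lemma sum_sq_coeffs {M : ℕ} (c : (Fin M → Fin 2) → ℝ) :
    ∑ y : Fin M → Fin 2, (∑ s, c s * chi s y) ^ 2 = 2 ^ M * ∑ s, (c s) ^ 2 := by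
  have : ∀ y : Fin M → Fin 2, (∑ s, c s * chi s y) ^ 2
      = ∑ s, ∑ t, (c s * c t) * (chi s y * chi t y) := by
    intro y
    rw [sq, Finset.sum_mul_sum]
    exact Finset.sum_congr rfl fun s _ => Finset.sum_congr rfl fun t _ => by ring
  rw [Finset.sum_congr rfl fun y _ => this y, Finset.sum_comm]
  have : ∀ s : Fin M → Fin 2,
      (∑ y : Fin M → Fin 2, ∑ t, (c s * c t) * (chi s y * chi t y)) = 2 ^ M * (c s) ^ 2 := by
    intro s
    rw [Finset.sum_comm]
    have h2 : ∀ t : Fin M → Fin 2,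
        (∑ y : Fin M → Fin 2, (c s * c t) * (chi s y * chi t y))
          = (c s * c t) * (if s = t then (2 : ℝ) ^ M else 0) := by
      intro t
      rw [← Finset.mul_sum, chi_ortho]
    rw [Finset.sum_congr rfl fun t _ => h2 t]
    simp only [mul_ite, mul_zero, Finset.sum_ite_eq, Finset.mem_univ, if_true]
    ring
  rw [Finset.sum_congr rfl fun s _ => this s, ← Finset.mul_sum]

/-- Fourier inversion. -/
lemma fourier2_inversion {r M : ℕ} (q : (Fin r → Fin 2) → (Fin M → Fin 2) → ℝ)
    (x : Fin r → Fin 2) (y : Fin M → Fin 2) :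
    ∑ s, fourier2 q x s * chi s y = q x y := by
  unfold fourier2
  have : ∀ s : Fin M → Fin 2,
      (((2 : ℝ) ^ M)⁻¹ * ∑ y' : Fin M → Fin 2,
          (-1 : ℝ) ^ (∑ i, (s i).val * (y' i).val) * q x y') * chi s y
        = ((2 : ℝ) ^ M)⁻¹ * ∑ y' : Fin M → Fin 2, q x y' * (chi y' s * chi y s) := by
    intro s
    rw [mul_assoc, Finset.sum_mul]
    refine congrArg (((2 : ℝ) ^ M)⁻¹ * ·) (Finset.sum_congr rfl fun y' _ => ?_)
    have e1 : ((-1 : ℝ) ^ (∑ i : Fin M, (s i).val * (y' i).val)) = chi y' s := by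
      show chi s y' = chi y' s
      exact chi_symm s y'
    rw [e1, chi_symm s y]
    ring
  rw [Finset.sum_congr rfl fun s _ => this s, ← Finset.mul_sum, Finset.sum_comm]
  have h2 : ∀ y' : Fin M → Fin 2,
      (∑ s : Fin M → Fin 2, q x y' * (chi y' s * chi y s))
        = q x y' * (if y' = y then (2 : ℝ) ^ M else 0) := by
    intro y'
    rw [← Finset.mul_sum, chi_ortho]
  rw [Finset.sum_congr rfl fun y' _ => h2 y']
  simp only [mul_ite, mul_zero, Finset.sum_ite_eq', Finset.mem_univ, if_true]
  field_simp

/-- Parseval for fourier2. -/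
lemma fourier2_parseval {r M : ℕ} (q : (Fin r → Fin 2) → (Fin M → Fin 2) → ℝ)
    (x : Fin r → Fin 2) :
    (2 : ℝ) ^ M * ∑ s : Fin M → Fin 2, (fourier2 q x s) ^ 2
      = ∑ y : Fin M → Fin 2, (q x y) ^ 2 := by
  rw [← sum_sq_coeffs (fun s => fourier2 q x s)]
  exact Finset.sum_congr rfl fun y _ => by rw [fourier2_inversion]

/-- Mean-type bound for truncating the Fourier series of a noisy function. -/
theorem truncation_mean_bound (r M : ℕ) (hr : 0 < r) (hM : 0 < M) (l : ℕ)
    (ε : ℝ) (hε0 : 0 ≤ ε) (hε : ε ≤ 1 / 2)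
    (q : (Fin r → Fin 2) → (Fin M → Fin 2) → ℝ) :
    (((2 : ℝ) ^ M)⁻¹ * ∑ y : Fin M → Fin 2,
        ∑ x : Fin r → Fin 2, |truncFn ε l q x y - noisyFn ε q x y|) ^ 2
      ≤ 2 ^ r * (1 - 2 * ε) ^ (2 * l) *
          (((2 : ℝ) ^ M)⁻¹ * ∑ x : Fin r → Fin 2, ∑ y : Fin M → Fin 2, (q x y) ^ 2) := by
  set η : ℝ := 1 - 2 * ε with hη
  have hη0 : 0 ≤ η := by rw [hη]; linarith
  have hη1 : η ≤ 1 := by rw [hη]; linarith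
  -- coefficients of the difference
  set c : (Fin r → Fin 2) → (Fin M → Fin 2) → ℝ :=
    fun x s => if hammingWt s < l then 0 else -(η ^ hammingWt s * fourier2 q x s) with hc
  have hdiff : ∀ x y, truncFn ε l q x y - noisyFn ε q x y = ∑ s, c x s * chi s y := by
    intro x y
    unfold truncFn noisyFn
    rw [Finset.sum_filter, ← Finset.sum_sub_distrib]
    refine Finset.sum_congr rfl fun s _ => ?_
    simp only [hc]
    split <;> (show _ = _ * chi s y; unfold chi; ring)
  -- key per-x bound on Σ_y (diff)^2
  have key : ∀ x, ∑ y : Fin M → Fin 2, (truncFn ε l q x y - noisyFn ε q x y) ^ 2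
      ≤ η ^ (2 * l) * ∑ y : Fin M → Fin 2, (q x y) ^ 2 := by
    intro x
    have h1 : ∑ y : Fin M → Fin 2, (truncFn ε l q x y - noisyFn ε q x y) ^ 2
        = 2 ^ M * ∑ s, (c x s) ^ 2 := by
      rw [Finset.sum_congr rfl fun y _ => by rw [hdiff x y], sum_sq_coeffs]
    have h2 : ∑ s : Fin M → Fin 2, (c x s) ^ 2
        ≤ η ^ (2 * l) * ∑ s : Fin M → Fin 2, (fourier2 q x s) ^ 2 := by
      rw [Finset.mul_sum]
      refine Finset.sum_le_sum fun s _ => ?_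
      simp only [hc]
      split
      · rw [zero_pow (by norm_num)]
        positivity
      · rename_i h
        push_neg at h
        rw [neg_pow, mul_pow]
        have : (η ^ hammingWt s) ^ 2 ≤ η ^ (2 * l) := by
          rw [← pow_mul]
          apply pow_le_pow_of_le_one hη0 hη1
          omega
        calc (-1 : ℝ) ^ 2 * ((η ^ hammingWt s) ^ 2 * (fourier2 q x s) ^ 2)
            = (η ^ hammingWt s) ^ 2 * (fourier2 q x s) ^ 2 := by norm_num
          _ ≤ η ^ (2 * l) * (fourier2 q x s) ^ 2 := by
              apply mul_le_mul_of_nonneg_right this (by positivity)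
    calc ∑ y : Fin M → Fin 2, (truncFn ε l q x y - noisyFn ε q x y) ^ 2
        = 2 ^ M * ∑ s, (c x s) ^ 2 := h1
      _ ≤ 2 ^ M * (η ^ (2 * l) * ∑ s : Fin M → Fin 2, (fourier2 q x s) ^ 2) := by
          apply mul_le_mul_of_nonneg_left h2 (by positivity)
      _ = η ^ (2 * l) * (2 ^ M * ∑ s : Fin M → Fin 2, (fourier2 q x s) ^ 2) := by ring
      _ = η ^ (2 * l) * ∑ y : Fin M → Fin 2, (q x y) ^ 2 := by rw [fourier2_parseval]
  -- Cauchy–Schwarz steps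
  set A : (Fin r → Fin 2) → ℝ := fun x => ∑ y : Fin M → Fin 2,
    |truncFn ε l q x y - noisyFn ε q x y| with hA
  have hswap : (∑ y : Fin M → Fin 2, ∑ x : Fin r → Fin 2,
      |truncFn ε l q x y - noisyFn ε q x y|) = ∑ x, A x := by
    rw [Finset.sum_comm]
  have hcardr : ((Finset.univ : Finset (Fin r → Fin 2)).card : ℝ) = 2 ^ r := by
    simp [Finset.card_univ]
  have hcardM : ((Finset.univ : Finset (Fin M → Fin 2)).card : ℝ) = 2 ^ M := by
    simp [Finset.card_univ]
  have hAx : ∀ x, (A x) ^ 2 ≤ 2 ^ M * (η ^ (2 * l) * ∑ y : Fin M → Fin 2, (q x y) ^ 2) := by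
    intro x
    calc (A x) ^ 2 ≤ ((Finset.univ : Finset (Fin M → Fin 2)).card : ℝ) *
          ∑ y : Fin M → Fin 2, |truncFn ε l q x y - noisyFn ε q x y| ^ 2 :=
        sq_sum_le_card_mul_sum_sq
      _ = 2 ^ M * ∑ y : Fin M → Fin 2, (truncFn ε l q x y - noisyFn ε q x y) ^ 2 := by
          rw [hcardM]
          congr 1
          exact Finset.sum_congr rfl fun y _ => sq_abs _
      _ ≤ 2 ^ M * (η ^ (2 * l) * ∑ y : Fin M → Fin 2, (q x y) ^ 2) := by
          apply mul_le_mul_of_nonneg_left (key x) (by positivity)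
  have hS : (∑ x, A x) ^ 2 ≤ 2 ^ r * (2 ^ M * (η ^ (2 * l) *
      ∑ x : Fin r → Fin 2, ∑ y : Fin M → Fin 2, (q x y) ^ 2)) := by
    calc (∑ x, A x) ^ 2 ≤ ((Finset.univ : Finset (Fin r → Fin 2)).card : ℝ) *
          ∑ x, (A x) ^ 2 := sq_sum_le_card_mul_sum_sq
      _ ≤ 2 ^ r * ∑ x, 2 ^ M * (η ^ (2 * l) * ∑ y : Fin M → Fin 2, (q x y) ^ 2) := by
          rw [hcardr]
          apply mul_le_mul_of_nonneg_left (Finset.sum_le_sum fun x _ => hAx x) (by positivity)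
      _ = 2 ^ r * (2 ^ M * (η ^ (2 * l) *
          ∑ x : Fin r → Fin 2, ∑ y : Fin M → Fin 2, (q x y) ^ 2)) := by
          rw [← Finset.mul_sum, ← Finset.mul_sum]
  rw [hswap, mul_pow]
  have h2M : (0:ℝ) < (2:ℝ) ^ M := by positivity
  calc (((2 : ℝ) ^ M)⁻¹) ^ 2 * (∑ x, A x) ^ 2
      ≤ (((2 : ℝ) ^ M)⁻¹) ^ 2 * (2 ^ r * (2 ^ M * (η ^ (2 * l) *
        ∑ x : Fin r → Fin 2, ∑ y : Fin M → Fin 2, (q x y) ^ 2))) := by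
        apply mul_le_mul_of_nonneg_left hS (by positivity)
    _ = 2 ^ r * η ^ (2 * l) * (((2 : ℝ) ^ M)⁻¹ *
        ∑ x : Fin r → Fin 2, ∑ y : Fin M → Fin 2, (q x y) ^ 2) := by
        field_simp
end

section
/- Define F : ℝ³ → ℝ³ by F(ε₁, ε₂, ε₃) = (ε_z, ε_x, ε_y) with ε_z = ε₁(1-ε₂)(1-ε₃) + (1-ε₁)ε₂ε₃, ε_x = ε₂(1-ε₁)(1-ε₃) + (1-ε₂)ε₁ε₃, and ε_y = ε₃(1-ε₁)(1-ε₂) + (1-ε₃)ε₁ε₂. Then F is differentiable at every point, and the determinant of its derivative (the Jacobian determinant) at the point (ε₁, ε₂, ε₃) equals (1-2ε₁)(1-2ε₂)(1-2ε₃). -/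
/-- The map sending the rates `(ε₁, ε₂, ε₃)` of three composed single-Pauli error channels
(`Z`-type, then `X`-type, then `Y`-type) to the coefficients `(ε_z, ε_x, ε_y)` of the
resulting mixed Pauli channel. -/
noncomputable def pauliRateMap : ℝ × ℝ × ℝ → ℝ × ℝ × ℝ := fun p =>
  (p.1 * (1 - p.2.1) * (1 - p.2.2) + (1 - p.1) * p.2.1 * p.2.2,
   p.2.1 * (1 - p.1) * (1 - p.2.2) + (1 - p.2.1) * p.1 * p.2.2,
   p.2.2 * (1 - p.1) * (1 - p.2.1) + (1 - p.2.2) * p.1 * p.2.1)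

/-- Linear isomorphism `ℝ × ℝ × ℝ ≃ (Fin 3 → ℝ)`. -/
noncomputable def prodEquivFun3 : (ℝ × ℝ × ℝ) ≃ₗ[ℝ] (Fin 3 → ℝ) where
  toFun p := ![p.1, p.2.1, p.2.2]
  invFun f := (f 0, f 1, f 2)
  map_add' x y := by funext i; fin_cases i <;> simp
  map_smul' c x := by funext i; fin_cases i <;> simp
  left_inv p := rfl
  right_inv f := by funext i; fin_cases i <;> rfl

theorem prodEquivFun3_apply (q : ℝ × ℝ × ℝ) : prodEquivFun3 q = ![q.1, q.2.1, q.2.2] := rfl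

theorem prodEquivFun3_symm_apply (f : Fin 3 → ℝ) : prodEquivFun3.symm f = (f 0, f 1, f 2) := rfl

/-- The Jacobian linear map of `pauliRateMap` at `p`. -/
noncomputable def pauliDeriv (p : ℝ × ℝ × ℝ) : (ℝ × ℝ × ℝ) →ₗ[ℝ] (ℝ × ℝ × ℝ) where
  toFun q :=
    (((1 - p.2.1) * (1 - p.2.2) - p.2.1 * p.2.2) * q.1
      + (-(p.1 * (1 - p.2.2)) + (1 - p.1) * p.2.2) * q.2.1
      + (-(p.1 * (1 - p.2.1)) + (1 - p.1) * p.2.1) * q.2.2,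
     (-(p.2.1 * (1 - p.2.2)) + (1 - p.2.1) * p.2.2) * q.1
      + ((1 - p.1) * (1 - p.2.2) - p.1 * p.2.2) * q.2.1
      + (-(p.2.1 * (1 - p.1)) + (1 - p.2.1) * p.1) * q.2.2,
     (-(p.2.2 * (1 - p.2.1)) + (1 - p.2.2) * p.2.1) * q.1
      + (-(p.2.2 * (1 - p.1)) + (1 - p.2.2) * p.1) * q.2.1
      + ((1 - p.1) * (1 - p.2.1) - p.1 * p.2.1) * q.2.2)
  map_add' x y := by
    refine Prod.ext ?_ (Prod.ext ?_ ?_) <;> simp <;> ring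
  map_smul' c x := by
    refine Prod.ext ?_ (Prod.ext ?_ ?_) <;> simp <;> ring

theorem pauliRateMap_hasFDerivAt (p : ℝ × ℝ × ℝ) :
    HasFDerivAt pauliRateMap ((pauliDeriv p).toContinuousLinearMap) p := by
  have h1 : HasFDerivAt (fun q : ℝ × ℝ × ℝ => q.1) (ContinuousLinearMap.fst ℝ ℝ (ℝ × ℝ)) p :=
    hasFDerivAt_fst
  have h2 : HasFDerivAt (fun q : ℝ × ℝ × ℝ => q.2.1)
      ((ContinuousLinearMap.fst ℝ ℝ ℝ).comp (ContinuousLinearMap.snd ℝ ℝ (ℝ × ℝ))) p :=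
    hasFDerivAt_snd.fst
  have h3 : HasFDerivAt (fun q : ℝ × ℝ × ℝ => q.2.2)
      ((ContinuousLinearMap.snd ℝ ℝ ℝ).comp (ContinuousLinearMap.snd ℝ ℝ (ℝ × ℝ))) p :=
    hasFDerivAt_snd.snd
  have H := HasFDerivAt.prodMk (((h1.mul (h2.const_sub 1)).mul (h3.const_sub 1)).add
      (((h1.const_sub 1).mul h2).mul h3))
    (HasFDerivAt.prodMk (((h2.mul (h1.const_sub 1)).mul (h3.const_sub 1)).add
      (((h2.const_sub 1).mul h1).mul h3))
     (((h3.mul (h1.const_sub 1)).mul (h2.const_sub 1)).add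
      (((h3.const_sub 1).mul h1).mul h2)))
  refine H.congr_fderiv ?_
  refine ContinuousLinearMap.ext fun q => ?_
  refine Prod.ext ?_ (Prod.ext ?_ ?_) <;>
    simp [pauliDeriv, ContinuousLinearMap.smulRight] <;> ring

/-- `pauliRateMap` is differentiable everywhere and its Jacobian determinant at
`(ε₁, ε₂, ε₃)` equals `(1-2ε₁)(1-2ε₂)(1-2ε₃)`. -/
theorem pauliRateMap_jacobian (p : ℝ × ℝ × ℝ) :
    DifferentiableAt ℝ pauliRateMap p ∧
      LinearMap.det ((fderiv ℝ pauliRateMap p) : (ℝ × ℝ × ℝ) →ₗ[ℝ] (ℝ × ℝ × ℝ))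
        = (1 - 2 * p.1) * (1 - 2 * p.2.1) * (1 - 2 * p.2.2) := by
  have H := pauliRateMap_hasFDerivAt p
  refine ⟨H.differentiableAt, ?_⟩
  rw [H.fderiv]
  have hcoe : (((pauliDeriv p).toContinuousLinearMap : (ℝ × ℝ × ℝ) →L[ℝ] (ℝ × ℝ × ℝ)) :
      (ℝ × ℝ × ℝ) →ₗ[ℝ] (ℝ × ℝ × ℝ)) = pauliDeriv p := rfl
  rw [hcoe]
  set b : Module.Basis (Fin 3) ℝ (ℝ × ℝ × ℝ) := Module.Basis.ofEquivFun prodEquivFun3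
  rw [← LinearMap.det_toMatrix b, Matrix.det_fin_three]
  simp [LinearMap.toMatrix_apply, b, Module.Basis.coe_ofEquivFun, prodEquivFun3_apply, prodEquivFun3_symm_apply, pauliDeriv,
    Pi.single_apply]
  ring
end

section
/- Define F : ℝ³ → ℝ³ by F(ε₁, ε₂, ε₃) = (ε_z, ε_x, ε_y) with ε_z = ε₁(1-ε₂)(1-ε₃) + (1-ε₁)ε₂ε₃, ε_x = ε₂(1-ε₁)(1-ε₃) + (1-ε₂)ε₁ε₃, and ε_y = ε₃(1-ε₁)(1-ε₂) + (1-ε₃)ε₁ε₂. If ε₁ ≠ 1/2, ε₂ ≠ 1/2 and ε₃ ≠ 1/2, then F is a local homeomorphism at (ε₁, ε₂, ε₃): there exist open sets U ∋ (ε₁, ε₂, ε₃) and V ∋ F(ε₁, ε₂, ε₃) such that F restricted to U is a bijection onto V whose inverse is continuous. -/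
/-- The Jacobian of `pauliRateMap` at `(a, b, c)`, as a linear map. -/
def pauliJacobian (a b c : ℝ) : (ℝ × ℝ × ℝ) →ₗ[ℝ] (ℝ × ℝ × ℝ) where
  toFun v :=
    ((1 - b - c) * v.1 + (c - a) * v.2.1 + (b - a) * v.2.2,
     (c - b) * v.1 + (1 - a - c) * v.2.1 + (a - b) * v.2.2,
     (b - c) * v.1 + (a - c) * v.2.1 + (1 - a - b) * v.2.2)
  map_add' u v := by simp only [Prod.fst_add, Prod.snd_add]; refine Prod.ext ?_ (Prod.ext ?_ ?_) <;> simp <;> ring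
  map_smul' r v := by simp only [Prod.smul_fst, Prod.smul_snd, smul_eq_mul, RingHom.id_apply]; refine Prod.ext ?_ (Prod.ext ?_ ?_) <;> simp <;> ring

theorem pauliJacobian_injective {a b c : ℝ} (ha : a ≠ 1/2) (hb : b ≠ 1/2) (hc : c ≠ 1/2) :
    Function.Injective (pauliJacobian a b c) := by
  have hα : (1 - 2*a) ≠ 0 := fun h => ha (by linarith)
  have hβ : (1 - 2*b) ≠ 0 := fun h => hb (by linarith)
  have hγ : (1 - 2*c) ≠ 0 := fun h => hc (by linarith)
  rw [← LinearMap.ker_eq_bot, LinearMap.ker_eq_bot']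
  intro v hv
  have e1 : (1 - b - c) * v.1 + (c - a) * v.2.1 + (b - a) * v.2.2 = 0 :=
    congrArg Prod.fst hv
  have e2 : (c - b) * v.1 + (1 - a - c) * v.2.1 + (a - b) * v.2.2 = 0 :=
    congrArg (fun q => q.2.1) hv
  have e3 : (b - c) * v.1 + (a - c) * v.2.1 + (1 - a - b) * v.2.2 = 0 :=
    congrArg (fun q => q.2.2) hv
  have hx : v.1 = 0 := by
    have h2 : (2 * ((1 - 2*b) * (1 - 2*c))) * v.1 = 0 := by
      linear_combination ((1-2*c)+(1-2*b)) * e1 + ((1-2*c)-(1-2*a)) * e2 + ((1-2*b)-(1-2*a)) * e3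
    have := mul_ne_zero (two_ne_zero (α := ℝ)) (mul_ne_zero hβ hγ)
    exact (mul_eq_zero.mp h2).resolve_left this
  have hy : v.2.1 = 0 := by
    have h2 : (1 - 2*a) * v.2.1 = 0 := by linear_combination e1 + e2 - (1 - 2*b) * hx
    exact (mul_eq_zero.mp h2).resolve_left hα
  have hz : v.2.2 = 0 := by
    have h2 : (1 - 2*a) * v.2.2 = 0 := by linear_combination e1 + e3 - (1 - 2*c) * hx
    exact (mul_eq_zero.mp h2).resolve_left hα
  exact Prod.ext hx (Prod.ext hy hz)

/-- If none of the rates equals `1/2`, then `pauliRateMap` is a local homeomorphism at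
`(ε₁, ε₂, ε₃)`: there are open sets `U ∋ (ε₁, ε₂, ε₃)` and `V ∋ F(ε₁, ε₂, ε₃)` such that
`F` restricted to `U` is a bijection onto `V` with a continuous inverse. -/
theorem pauliRateMap_local_homeomorph (p : ℝ × ℝ × ℝ)
    (h₁ : p.1 ≠ 1 / 2) (h₂ : p.2.1 ≠ 1 / 2) (h₃ : p.2.2 ≠ 1 / 2) :
    ∃ U V : Set (ℝ × ℝ × ℝ), IsOpen U ∧ IsOpen V ∧ p ∈ U ∧ pauliRateMap p ∈ V ∧
      Set.BijOn pauliRateMap U V ∧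
      ∃ g : ℝ × ℝ × ℝ → ℝ × ℝ × ℝ, ContinuousOn g V ∧
        Set.LeftInvOn g pauliRateMap U ∧ Set.RightInvOn g pauliRateMap V := by
  obtain ⟨a, b, c⟩ := p
  simp only at h₁ h₂ h₃ ⊢
  -- the derivative as a continuous linear equiv
  let ℓ : (ℝ × ℝ × ℝ) ≃ₗ[ℝ] (ℝ × ℝ × ℝ) :=
    LinearMap.linearEquivOfInjective (pauliJacobian a b c)
      (pauliJacobian_injective h₁ h₂ h₃) rfl
  let E : (ℝ × ℝ × ℝ) ≃L[ℝ] (ℝ × ℝ × ℝ) := ℓ.toContinuousLinearEquiv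
  -- pauliRateMap has strict derivative E at (a,b,c)
  have ha : HasStrictFDerivAt (fun q : ℝ × ℝ × ℝ => q.1)
      (ContinuousLinearMap.fst ℝ ℝ (ℝ × ℝ)) (a, b, c) := hasStrictFDerivAt_fst
  have hb : HasStrictFDerivAt (fun q : ℝ × ℝ × ℝ => q.2.1)
      ((ContinuousLinearMap.fst ℝ ℝ ℝ).comp (ContinuousLinearMap.snd ℝ ℝ (ℝ × ℝ)))
      (a, b, c) := hasStrictFDerivAt_fst.comp _ hasStrictFDerivAt_snd
  have hc : HasStrictFDerivAt (fun q : ℝ × ℝ × ℝ => q.2.2)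
      ((ContinuousLinearMap.snd ℝ ℝ ℝ).comp (ContinuousLinearMap.snd ℝ ℝ (ℝ × ℝ)))
      (a, b, c) := hasStrictFDerivAt_snd.comp _ hasStrictFDerivAt_snd
  have hF := HasStrictFDerivAt.prodMk (((ha.mul (hb.const_sub 1)).mul (hc.const_sub 1)).add
      (((ha.const_sub 1).mul hb).mul hc))
    (HasStrictFDerivAt.prodMk (((hb.mul (ha.const_sub 1)).mul (hc.const_sub 1)).add
      (((hb.const_sub 1).mul ha).mul hc))
     (((hc.mul (ha.const_sub 1)).mul (hb.const_sub 1)).add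
      (((hc.const_sub 1).mul ha).mul hb)))
  have hE : HasStrictFDerivAt pauliRateMap
      (E : (ℝ × ℝ × ℝ) →L[ℝ] (ℝ × ℝ × ℝ)) (a, b, c) := by
    refine hF.congr_fderiv ?_
    refine ContinuousLinearMap.ext fun v => ?_
    simp only [E, ℓ, ContinuousLinearEquiv.coe_coe, LinearEquiv.coe_toContinuousLinearEquiv',
      LinearMap.linearEquivOfInjective_apply, pauliJacobian, LinearMap.coe_mk, AddHom.coe_mk,
      ContinuousLinearMap.add_apply, ContinuousLinearMap.coe_smul', Pi.smul_apply,
      ContinuousLinearMap.prod_apply, ContinuousLinearMap.smul_apply,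
      ContinuousLinearMap.coe_comp', Function.comp_apply, ContinuousLinearMap.coe_fst',
      ContinuousLinearMap.coe_snd', ContinuousLinearMap.neg_apply, smul_eq_mul,
      Prod.mk_add_mk, Prod.mk.injEq, Pi.mul_apply]
    refine ⟨by ring, by ring, by ring⟩
  set ph := hE.toOpenPartialHomeomorph pauliRateMap with hph
  have hcoe : (ph : ℝ × ℝ × ℝ → ℝ × ℝ × ℝ) = pauliRateMap :=
    hE.toOpenPartialHomeomorph_coe
  refine ⟨ph.source, ph.target, ph.open_source, ph.open_target,
    hE.mem_toOpenPartialHomeomorph_source, hE.image_mem_toOpenPartialHomeomorph_target,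
    ?_, ph.symm, ph.continuousOn_symm, ?_, ?_⟩
  · have := ph.bijOn
    rwa [hcoe] at this
  · have := ph.leftInvOn
    rwa [hcoe] at this
  · have := ph.rightInvOn
    rwa [hcoe] at this
end
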